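/- arXiv:2209.01545 — 2 statements merged into one kernel-verified Lean document; each statement's English description precedes it below -/
import Mathlib

section
/- Any finite simple graph with m edges can be decomposed into at most m planar subgraphs, and in fact every graph on n vertices decomposes into at most ⌈n/2⌉ planar subgraphs. -/
/-- A simple graph is planar if it has a drawing in the plane `ℂ` with straight-line
edges (by Fáry's theorem this is equivalent to general planarity for simple graphs):
vertices map injectively to points, two distinct edges meet only in common endpoints,
and no vertex lies on an edge other than at its endpoints. -/
def IsPlanar {V : Type*} (G : SimpleGraph V) : Prop :=
  ∃ f : V → ℂ, Function.Injective f ∧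
    (∀ ⦃u v x y : V⦄, G.Adj u v → G.Adj x y → ({u, v} : Set V) ≠ {x, y} →
      segment ℝ (f u) (f v) ∩ segment ℝ (f x) (f y) ⊆ f '' (({u, v} : Set V) ∩ {x, y})) ∧
    (∀ ⦃w u v : V⦄, G.Adj u v → f w ∈ segment ℝ (f u) (f v) → w = u ∨ w = v)


lemma mem_seg_ab {p : ℂ} (hp : p ∈ segment ℝ (-1 : ℂ) 1) :
    p.im = 0 ∧ -1 ≤ p.re ∧ p.re ≤ 1 := by
  rw [segment_eq_image] at hp
  obtain ⟨t, ht, rfl⟩ := hp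
  simp only [Set.mem_Icc] at ht
  simp [Complex.real_smul, Complex.ext_iff]
  constructor <;> nlinarith [ht.1, ht.2]

lemma mem_seg_av {c : ℝ} {p : ℂ} (hp : p ∈ segment ℝ (-1 : ℂ) (c * Complex.I)) :
    -1 ≤ p.re ∧ p.re ≤ 0 ∧ p.im = (p.re + 1) * c := by
  rw [segment_eq_image] at hp
  obtain ⟨t, ht, rfl⟩ := hp
  simp only [Set.mem_Icc] at ht
  simp [Complex.real_smul, Complex.ext_iff]
  exact ht

lemma mem_seg_bv {c : ℝ} {p : ℂ} (hp : p ∈ segment ℝ (1 : ℂ) (c * Complex.I)) :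
    0 ≤ p.re ∧ p.re ≤ 1 ∧ p.im = (1 - p.re) * c := by
  rw [segment_eq_image] at hp
  obtain ⟨t, ht, rfl⟩ := hp
  simp only [Set.mem_Icc] at ht
  simp [Complex.real_smul, Complex.ext_iff]
  constructor <;> nlinarith [ht.1, ht.2]

lemma seg_av_ab {c : ℝ} (hc : 0 < c) {p : ℂ}
    (h1 : p ∈ segment ℝ (-1 : ℂ) (c * Complex.I)) (h2 : p ∈ segment ℝ (-1 : ℂ) 1) :
    p = -1 := by
  obtain ⟨a1, a2, a3⟩ := mem_seg_av h1
  obtain ⟨b1, b2, b3⟩ := mem_seg_ab h2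
  have hre : p.re = -1 := le_antisymm (by nlinarith) a1
  exact Complex.ext (by simp [hre]) (by simp [b1])

lemma seg_bv_ab {c : ℝ} (hc : 0 < c) {p : ℂ}
    (h1 : p ∈ segment ℝ (1 : ℂ) (c * Complex.I)) (h2 : p ∈ segment ℝ (-1 : ℂ) 1) :
    p = 1 := by
  obtain ⟨a1, a2, a3⟩ := mem_seg_bv h1
  obtain ⟨b1, b2, b3⟩ := mem_seg_ab h2
  have hre : p.re = 1 := le_antisymm a2 (by nlinarith)
  exact Complex.ext (by simp [hre]) (by simp [b1])

lemma seg_av_av {c d : ℝ} (hc : 0 < c) (hd : 0 < d) (hcd : c ≠ d) {p : ℂ}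
    (h1 : p ∈ segment ℝ (-1 : ℂ) (c * Complex.I))
    (h2 : p ∈ segment ℝ (-1 : ℂ) (d * Complex.I)) : p = -1 := by
  obtain ⟨a1, a2, a3⟩ := mem_seg_av h1
  obtain ⟨b1, b2, b3⟩ := mem_seg_av h2
  have hre : p.re = -1 := by
    by_contra h
    have h1' : -1 < p.re := lt_of_le_of_ne a1 (Ne.symm h)
    have : (p.re + 1) * c = (p.re + 1) * d := by rw [← a3, ← b3]
    have : c = d := by
      have hpos : 0 < p.re + 1 := by linarith
      exact mul_left_cancel₀ (ne_of_gt hpos) this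
    exact hcd this
  have him : p.im = 0 := by rw [a3, hre]; ring
  exact Complex.ext (by simp [hre]) (by simp [him])

lemma seg_bv_bv {c d : ℝ} (hc : 0 < c) (hd : 0 < d) (hcd : c ≠ d) {p : ℂ}
    (h1 : p ∈ segment ℝ (1 : ℂ) (c * Complex.I))
    (h2 : p ∈ segment ℝ (1 : ℂ) (d * Complex.I)) : p = 1 := by
  obtain ⟨a1, a2, a3⟩ := mem_seg_bv h1
  obtain ⟨b1, b2, b3⟩ := mem_seg_bv h2
  have hre : p.re = 1 := by
    by_contra h
    have h1' : p.re < 1 := lt_of_le_of_ne a2 h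
    have : (1 - p.re) * c = (1 - p.re) * d := by rw [← a3, ← b3]
    have : c = d := mul_left_cancel₀ (by linarith) this
    exact hcd this
  have him : p.im = 0 := by rw [a3, hre]; ring
  exact Complex.ext (by simp [hre]) (by simp [him])

lemma seg_av_bv {c d : ℝ} {p : ℂ}
    (h1 : p ∈ segment ℝ (-1 : ℂ) (c * Complex.I))
    (h2 : p ∈ segment ℝ (1 : ℂ) (d * Complex.I)) : p = c * Complex.I ∧ c = d := by
  obtain ⟨a1, a2, a3⟩ := mem_seg_av h1
  obtain ⟨b1, b2, b3⟩ := mem_seg_bv h2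
  have hre : p.re = 0 := le_antisymm a2 b1
  have h4 : p.im = c := by rw [a3, hre]; ring
  have h5 : p.im = d := by rw [b3, hre]; ring
  exact ⟨Complex.ext (by simp [hre]) (by simp [h4]), by rw [← h4, h5]⟩

lemma isPlanar_pivot {V : Type*} [Fintype V] [DecidableEq V] (H : SimpleGraph V)
    (a b : V) (hab : a ≠ b)
    (htouch : ∀ u v, H.Adj u v → u = a ∨ u = b ∨ v = a ∨ v = b) : IsPlanar H := by
  classical
  set e := Fintype.equivFin V with he
  set g : V → ℝ := fun v => ((e v : ℕ) : ℝ) + 1 with hg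
  have hgpos : ∀ v, 0 < g v := fun v => by positivity
  have hginj : Function.Injective g := by
    intro x y h
    have : ((e x : ℕ) : ℝ) = ((e y : ℕ) : ℝ) := by simpa [hg] using h
    exact e.injective (Fin.ext (Nat.cast_injective this))
  set f : V → ℂ := fun x => if x = a then -1 else if x = b then 1
      else ((g x : ℝ) : ℂ) * Complex.I with hf
  have hfa : f a = -1 := by simp [hf]
  have hfb : f b = 1 := by simp [hf, hab.symm]
  have hfo : ∀ x, x ≠ a → x ≠ b → f x = ((g x : ℝ) : ℂ) * Complex.I := by
    intro x h1 h2; simp [hf, h1, h2]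
  have fval : ∀ x, (x = a ∧ f x = -1) ∨ (x = b ∧ f x = 1) ∨
      (x ≠ a ∧ x ≠ b ∧ (f x).re = 0 ∧ (f x).im = g x) := by
    intro x
    by_cases h1 : x = a
    · exact Or.inl ⟨h1, h1 ▸ hfa⟩
    by_cases h2 : x = b
    · exact Or.inr (Or.inl ⟨h2, h2 ▸ hfb⟩)
    · exact Or.inr (Or.inr ⟨h1, h2, by rw [hfo x h1 h2]; simp, by rw [hfo x h1 h2]; simp⟩)
  have finj : Function.Injective f := by
    intro x y hxy
    rcases fval x with ⟨hx, h1⟩ | ⟨hx, h1⟩ | ⟨hx, hx', h1, h1'⟩ <;>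
      rcases fval y with ⟨hy, h2⟩ | ⟨hy, h2⟩ | ⟨hy, hy', h2, h2'⟩
    · rw [hx, hy]
    · exfalso; rw [h1, h2] at hxy; exact absurd hxy (by norm_num)
    · exfalso
      have := congrArg Complex.re hxy; rw [h2] at this
      rw [h1] at this; norm_num at this
    · exfalso; rw [h1, h2] at hxy; exact absurd hxy (by norm_num)
    · rw [hx, hy]
    · exfalso
      have := congrArg Complex.re hxy; rw [h2] at this
      rw [h1] at this; norm_num at this
    · exfalso
      have := congrArg Complex.re hxy; rw [h1] at this
      rw [h2] at this; norm_num at this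
    · exfalso
      have := congrArg Complex.re hxy; rw [h1] at this
      rw [h2] at this; norm_num at this
    · have := congrArg Complex.im hxy; rw [h1', h2'] at this
      exact hginj this
  have norm : ∀ u v, H.Adj u v →
      ((u = a ∧ v = b) ∨ (u = a ∧ v ≠ a ∧ v ≠ b) ∨ (u = b ∧ v ≠ a ∧ v ≠ b)) ∨
      ((v = a ∧ u = b) ∨ (v = a ∧ u ≠ a ∧ u ≠ b) ∨ (v = b ∧ u ≠ a ∧ u ≠ b)) := by
    intro u v hadj
    have hne : u ≠ v := hadj.ne
    rcases htouch u v hadj with h|h|h|h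
    · by_cases h2 : v = b
      · exact Or.inl (Or.inl ⟨h, h2⟩)
      · exact Or.inl (Or.inr (Or.inl ⟨h, fun hv => hne (by rw [h, hv]), h2⟩))
    · by_cases h2 : v = a
      · exact Or.inr (Or.inl ⟨h2, h⟩)
      · exact Or.inl (Or.inr (Or.inr ⟨h, h2, fun hv => hne (by rw [h, hv])⟩))
    · by_cases h2 : u = b
      · exact Or.inr (Or.inl ⟨h, h2⟩)
      · exact Or.inr (Or.inr (Or.inl ⟨h, fun hu => hne (by rw [h, hu]), h2⟩))
    · by_cases h2 : u = a
      · exact Or.inl (Or.inl ⟨h2, h⟩)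
      · exact Or.inr (Or.inr (Or.inr ⟨h, h2, fun hu => hne (by rw [h, hu])⟩))
  have key : ∀ u v x y : V,
      ((u = a ∧ v = b) ∨ (u = a ∧ v ≠ a ∧ v ≠ b) ∨ (u = b ∧ v ≠ a ∧ v ≠ b)) →
      ((x = a ∧ y = b) ∨ (x = a ∧ y ≠ a ∧ y ≠ b) ∨ (x = b ∧ y ≠ a ∧ y ≠ b)) →
      ({u, v} : Set V) ≠ {x, y} →
      segment ℝ (f u) (f v) ∩ segment ℝ (f x) (f y) ⊆ f '' (({u, v} : Set V) ∩ {x, y}) := by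
    rintro u v x y h1 h2 hne p ⟨hp1, hp2⟩
    rcases h1 with ⟨hu, hv⟩ | ⟨hu, hva, hvb⟩ | ⟨hu, hva, hvb⟩ <;>
      rcases h2 with ⟨hx, hy⟩ | ⟨hx, hya, hyb⟩ | ⟨hx, hya, hyb⟩
    · exact absurd (by rw [hu, hv, hx, hy]) hne
    · rw [hu, hv, hfa, hfb] at hp1
      rw [hx, hfa] at hp2; rw [hfo y hya hyb] at hp2
      have hp := seg_av_ab (hgpos y) hp2 hp1
      exact ⟨a, ⟨by simp [hu], by simp [hx]⟩, by rw [hfa, hp]⟩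
    · rw [hu, hv, hfa, hfb] at hp1
      rw [hx, hfb] at hp2; rw [hfo y hya hyb] at hp2
      have hp := seg_bv_ab (hgpos y) hp2 hp1
      exact ⟨b, ⟨by simp [hv], by simp [hx]⟩, by rw [hfb, hp]⟩
    · rw [hx, hy, hfa, hfb] at hp2
      rw [hu, hfa] at hp1; rw [hfo v hva hvb] at hp1
      have hp := seg_av_ab (hgpos v) hp1 hp2
      exact ⟨a, ⟨by simp [hu], by simp [hx]⟩, by rw [hfa, hp]⟩
    · by_cases hvy : v = y
      · exact absurd (by rw [hu, hx, hvy]) hne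
      · rw [hu, hfa] at hp1; rw [hfo v hva hvb] at hp1
        rw [hx, hfa] at hp2; rw [hfo y hya hyb] at hp2
        have hp := seg_av_av (hgpos v) (hgpos y) (fun h => hvy (hginj h)) hp1 hp2
        exact ⟨a, ⟨by simp [hu], by simp [hx]⟩, by rw [hfa, hp]⟩
    · rw [hu, hfa] at hp1; rw [hfo v hva hvb] at hp1
      rw [hx, hfb] at hp2; rw [hfo y hya hyb] at hp2
      obtain ⟨hp, hgv⟩ := seg_av_bv hp1 hp2
      have hvy : v = y := hginj hgv
      refine ⟨v, ⟨by simp, by simp [hvy]⟩, ?_⟩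
      rw [hfo v hva hvb, hp]
    · rw [hx, hy, hfa, hfb] at hp2
      rw [hu, hfb] at hp1; rw [hfo v hva hvb] at hp1
      have hp := seg_bv_ab (hgpos v) hp1 hp2
      exact ⟨b, ⟨by simp [hu], by simp [hy]⟩, by rw [hfb, hp]⟩
    · rw [hu, hfb] at hp1; rw [hfo v hva hvb] at hp1
      rw [hx, hfa] at hp2; rw [hfo y hya hyb] at hp2
      obtain ⟨hp, hgy⟩ := seg_av_bv hp2 hp1
      have hvy : y = v := hginj hgy
      refine ⟨v, ⟨by simp, by simp [hvy.symm]⟩, ?_⟩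
      rw [hfo v hva hvb, hp, hvy]
    · by_cases hvy : v = y
      · exact absurd (by rw [hu, hx, hvy]) hne
      · rw [hu, hfb] at hp1; rw [hfo v hva hvb] at hp1
        rw [hx, hfb] at hp2; rw [hfo y hya hyb] at hp2
        have hp := seg_bv_bv (hgpos v) (hgpos y) (fun h => hvy (hginj h)) hp1 hp2
        exact ⟨b, ⟨by simp [hu], by simp [hx]⟩, by rw [hfb, hp]⟩
  have cond2 : ∀ ⦃u v x y : V⦄, H.Adj u v → H.Adj x y → ({u, v} : Set V) ≠ {x, y} →
      segment ℝ (f u) (f v) ∩ segment ℝ (f x) (f y) ⊆ f '' (({u, v} : Set V) ∩ {x, y}) := by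
    intro u v x y h1 h2 hne
    rcases norm u v h1 with n1 | n1 <;> rcases norm x y h2 with n2 | n2
    · exact key u v x y n1 n2 hne
    · rw [Set.pair_comm x y, segment_symm (𝕜 := ℝ) (x := f x) (y := f y)]
      exact key u v y x n1 n2 (by rw [Set.pair_comm y x]; exact hne)
    · rw [Set.pair_comm u v, segment_symm (𝕜 := ℝ) (x := f u) (y := f v)]
      exact key v u x y n1 n2 (by rw [Set.pair_comm v u]; exact hne)
    · rw [Set.pair_comm u v, Set.pair_comm x y,
        segment_symm (𝕜 := ℝ) (x := f u) (y := f v), segment_symm (𝕜 := ℝ) (x := f x) (y := f y)]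
      exact key v u y x n1 n2 (by rw [Set.pair_comm v u, Set.pair_comm y x]; exact hne)
  have base3 : ∀ w u v : V,
      ((u = a ∧ v = b) ∨ (u = a ∧ v ≠ a ∧ v ≠ b) ∨ (u = b ∧ v ≠ a ∧ v ≠ b)) →
      f w ∈ segment ℝ (f u) (f v) → w = u ∨ w = v := by
    rintro w u v (⟨hu, hv⟩ | ⟨hu, hva, hvb⟩ | ⟨hu, hva, hvb⟩) hmem
    · rw [hu, hv, hfa, hfb] at hmem
      rcases fval w with ⟨hw, _⟩ | ⟨hw, _⟩ | ⟨-, -, h1, h2⟩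
      · exact Or.inl (hw.trans hu.symm)
      · exact Or.inr (hw.trans hv.symm)
      · exfalso
        have him := (mem_seg_ab hmem).1
        rw [h2] at him
        linarith [hgpos w]
    · rw [hu, hfa] at hmem; rw [hfo v hva hvb] at hmem
      rcases fval w with ⟨hw, _⟩ | ⟨hw, h1⟩ | ⟨-, -, h1, h2⟩
      · exact Or.inl (hw.trans hu.symm)
      · exfalso
        have := (mem_seg_av hmem).2.1
        rw [h1] at this
        norm_num at this
      · obtain ⟨-, -, h3⟩ := mem_seg_av hmem
        rw [h1, h2] at h3
        have : g w = g v := by linarith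
        exact Or.inr (hginj this)
    · rw [hu, hfb] at hmem; rw [hfo v hva hvb] at hmem
      rcases fval w with ⟨hw, h1⟩ | ⟨hw, _⟩ | ⟨-, -, h1, h2⟩
      · exfalso
        have := (mem_seg_bv hmem).1
        rw [h1] at this
        norm_num at this
      · exact Or.inl (hw.trans hu.symm)
      · obtain ⟨-, -, h3⟩ := mem_seg_bv hmem
        rw [h1, h2] at h3
        have : g w = g v := by linarith
        exact Or.inr (hginj this)
  have cond3 : ∀ ⦃w u v : V⦄, H.Adj u v → f w ∈ segment ℝ (f u) (f v) → w = u ∨ w = v := by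
    intro w u v hadj hmem
    rcases norm u v hadj with h | h
    · exact base3 w u v h hmem
    · exact (base3 w v u h (by rwa [segment_symm (𝕜 := ℝ) (x := f v) (y := f u)])).symm
  exact ⟨f, finj, cond2, cond3⟩

lemma isPlanar_of_edgeless {V : Type*} [Fintype V] (H : SimpleGraph V)
    (h : ∀ u v, ¬ H.Adj u v) : IsPlanar H := by
  classical
  refine ⟨fun v => ((Fintype.equivFin V v : ℕ) : ℂ), ?_, ?_, ?_⟩
  · intro x y hxy
    exact (Fintype.equivFin V).injective (Fin.ext (Nat.cast_injective hxy))
  · intro u v x y h1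
    exact absurd h1 (h u v)
  · intro w u v h1
    exact absurd h1 (h u v)

lemma isPlanar_single {V : Type*} [Fintype V] [DecidableEq V] (E : Sym2 V)
    (hE : ¬ E.IsDiag) : IsPlanar (SimpleGraph.fromEdgeSet {E}) := by
  induction E using Sym2.ind with
  | _ a b =>
    have hab : a ≠ b := by simpa using hE
    apply isPlanar_pivot _ a b hab
    intro u v huv
    rw [SimpleGraph.fromEdgeSet_adj] at huv
    have := huv.1
    simp only [Set.mem_singleton_iff, Sym2.eq_iff] at this
    tauto

/-- Any finite simple graph with `m` edges decomposes into at most `m` planar subgraphs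
(edge sets partitioning `E(G)`); in fact every graph on `n` vertices decomposes into at
most `⌈n/2⌉` planar subgraphs. -/
theorem planar_decomposition_bounds {V : Type*} [Fintype V] [DecidableEq V]
    (G : SimpleGraph V) [DecidableRel G.Adj] :
    (∃ k ≤ G.edgeFinset.card, ∃ H : Fin k → SimpleGraph V,
      (∀ i, IsPlanar (H i)) ∧ (∀ u v : V, G.Adj u v ↔ ∃! i, (H i).Adj u v)) ∧
    (∃ k ≤ (Fintype.card V + 1) / 2, ∃ H : Fin k → SimpleGraph V,
      (∀ i, IsPlanar (H i)) ∧ (∀ u v : V, G.Adj u v ↔ ∃! i, (H i).Adj u v)) := by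
  classical
  constructor
  · refine ⟨G.edgeFinset.card, le_refl _,
      fun i => SimpleGraph.fromEdgeSet {(G.edgeFinset.equivFin.symm i : Sym2 V)}, ?_, ?_⟩
    · intro i
      apply isPlanar_single
      exact G.not_isDiag_of_mem_edgeSet
        (SimpleGraph.mem_edgeFinset.mp (G.edgeFinset.equivFin.symm i).2)
    · intro u v
      constructor
      · intro h
        have hE : s(u,v) ∈ G.edgeFinset := SimpleGraph.mem_edgeFinset.mpr h
        refine ⟨G.edgeFinset.equivFin ⟨s(u,v), hE⟩, ?_, ?_⟩
        · simp only [SimpleGraph.fromEdgeSet_adj]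
          refine ⟨?_, h.ne⟩
          simp
        · intro j hj
          simp only [SimpleGraph.fromEdgeSet_adj] at hj
          have h1 : (G.edgeFinset.equivFin.symm j : Sym2 V) = s(u,v) := by
            have := hj.1
            simp only [Set.mem_singleton_iff] at this
            exact this.symm
          have h2 : G.edgeFinset.equivFin.symm j = ⟨s(u,v), hE⟩ := Subtype.ext h1
          rw [← h2, Equiv.apply_symm_apply]
      · rintro ⟨i, hi, -⟩
        simp only [SimpleGraph.fromEdgeSet_adj] at hi
        have h1 := hi.1
        simp only [Set.mem_singleton_iff] at h1
        have hm : s(u,v) ∈ G.edgeFinset := by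
          rw [h1]; exact (G.edgeFinset.equivFin.symm i).2
        exact SimpleGraph.mem_edgeFinset.mp hm
  · set n := Fintype.card V with hn
    set e := Fintype.equivFin V with he
    refine ⟨(n+1)/2, le_refl _, fun i =>
      { Adj := fun u v => G.Adj u v ∧ min (e u).val (e v).val / 2 = i.val
        symm := ⟨fun u v h => ⟨h.1.symm, by rw [min_comm]; exact h.2⟩⟩
        loopless := ⟨fun v h => G.loopless.irrefl v h.1⟩ }, ?_, ?_⟩
    · intro i
      by_cases hcard : 2 ≤ n
      · have hilt := i.isLt
        have h2i : 2 * i.val < n := by omega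
        have hn0 : 0 < n := by omega
        set a := e.symm ⟨2 * i.val, h2i⟩ with ha
        set b := if h : 2 * i.val + 1 < n then e.symm ⟨2 * i.val + 1, h⟩
          else e.symm ⟨0, hn0⟩ with hb
        have hvala : ∀ w : V, (e w).val = 2 * i.val → w = a := by
          intro w hw
          have hw2 : e w = (⟨2 * i.val, h2i⟩ : Fin n) := Fin.ext hw
          rw [ha, ← hw2, Equiv.symm_apply_apply]
        have hvalb : ∀ w : V, (e w).val = 2 * i.val + 1 → w = b := by
          intro w hw
          have hodd : 2 * i.val + 1 < n := by have := (e w).isLt; omega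
          have hw2 : e w = (⟨2 * i.val + 1, hodd⟩ : Fin n) := Fin.ext hw
          rw [hb, dif_pos hodd, ← hw2, Equiv.symm_apply_apply]
        have hab : a ≠ b := by
          rw [ha, hb]
          by_cases hodd : 2 * i.val + 1 < n
          · rw [dif_pos hodd]
            intro hcon
            have h3 := congrArg Fin.val (e.symm.injective hcon)
            simp at h3
          · rw [dif_neg hodd]
            intro hcon
            have h3 := congrArg Fin.val (e.symm.injective hcon)
            simp at h3
            omega
        apply isPlanar_pivot _ a b hab
        intro u v huv
        obtain ⟨hadj, hmin⟩ := huv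
        have hne : (e u).val ≠ (e v).val := fun hh => hadj.ne (e.injective (Fin.ext hh))
        rcases min_choice (e u).val (e v).val with hm | hm
        · rw [hm] at hmin
          have hcase : (e u).val = 2 * i.val ∨ (e u).val = 2 * i.val + 1 := by omega
          rcases hcase with h | h
          · exact Or.inl (hvala u h)
          · exact Or.inr (Or.inl (hvalb u h))
        · rw [hm] at hmin
          have hcase : (e v).val = 2 * i.val ∨ (e v).val = 2 * i.val + 1 := by omega
          rcases hcase with h | h
          · exact Or.inr (Or.inr (Or.inl (hvala v h)))
          · exact Or.inr (Or.inr (Or.inr (hvalb v h)))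
      · apply isPlanar_of_edgeless
        intro u v h
        exact hcard (by rw [hn]; exact Fintype.one_lt_card_iff_nontrivial.mpr ⟨⟨u, v, h.1.ne⟩⟩)
    · intro u v
      constructor
      · intro h
        have hneq : (e u).val ≠ (e v).val := fun hh => h.ne (e.injective (Fin.ext hh))
        have h1 := (e u).isLt
        have h2 := (e v).isLt
        have hm1 := min_le_left (e u).val (e v).val
        have hm2 := min_le_right (e u).val (e v).val
        have hlt : min (e u).val (e v).val / 2 < (n+1)/2 := by omega
        refine ⟨⟨_, hlt⟩, ⟨h, rfl⟩, ?_⟩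
        rintro j ⟨-, hj⟩
        exact Fin.ext hj.symm
      · rintro ⟨i, hi, -⟩
        exact hi.1
end

section
/- Every single-qubit unitary U ∈ SU(2) (up to global phase, any U ∈ U(2)) can be decomposed as U = e^{iθ} J(α) J(β) J(γ) for real θ, α, β, γ, where J(α) is the (unnormalized, up to a factor 1/√2) matrix [[1, e^{iα}],[1, -e^{iα}]]. -/
open Complex Matrix

/-- The gate `J(α) = (1/√2) [[1, e^{iα}], [1, -e^{iα}]]`. -/
noncomputable def Jgate (α : ℝ) : Matrix (Fin 2) (Fin 2) ℂ :=
  ((Real.sqrt 2 : ℂ)⁻¹) • !![1, Complex.exp (α * Complex.I);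
                             1, -Complex.exp (α * Complex.I)]

lemma conj_exp_real (x : ℝ) : (starRingEnd ℂ) (Complex.exp (x * I)) = Complex.exp (-(x * I)) := by
  rw [← Complex.exp_conj]; congr 1; simp

lemma exp_mul_exp_neg' (x : ℝ) : Complex.exp (x * I) * Complex.exp (-(x * I)) = 1 := by
  rw [← Complex.exp_add]; ring_nf; exact Complex.exp_zero

lemma sqrt2_sq : ((Real.sqrt 2 : ℂ))⁻¹ * ((Real.sqrt 2 : ℂ))⁻¹ = 2⁻¹ := by
  rw [← mul_inv, ← Complex.ofReal_mul, Real.mul_self_sqrt (by norm_num)]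
  norm_num

lemma Jgate_unitary (α : ℝ) : Jgate α ∈ Matrix.unitaryGroup (Fin 2) ℂ := by
  rw [Matrix.mem_unitaryGroup_iff]
  ext i j
  have he := exp_mul_exp_neg' α
  fin_cases i <;> fin_cases j <;>
    simp [Jgate, Matrix.mul_apply, Fin.sum_univ_two, Matrix.star_apply, conj_exp_real,
      Matrix.one_apply, map_inv₀, Complex.conj_ofReal] <;>
    ring_nf <;>
    rw [show ((Real.sqrt 2 : ℂ))⁻¹ ^ 2 = 2⁻¹ by rw [sq]; exact sqrt2_sq] <;>
    first
      | linear_combination (2:ℂ)⁻¹ * he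
      | linear_combination -he
      | linear_combination (2:ℂ)⁻¹ * he - he

lemma smul_unitary (θ : ℝ) (U : Matrix (Fin 2) (Fin 2) ℂ)
    (hU : U ∈ Matrix.unitaryGroup (Fin 2) ℂ) :
    Complex.exp (θ * I) • U ∈ Matrix.unitaryGroup (Fin 2) ℂ := by
  rw [Matrix.mem_unitaryGroup_iff'] at hU ⊢
  rw [star_smul, Matrix.smul_mul, Matrix.mul_smul, hU, smul_smul]
  have : star (Complex.exp (θ * I)) * Complex.exp (θ * I) = 1 := by
    rw [Complex.star_def, ← Complex.exp_conj]
    simp only [_root_.map_mul, Complex.conj_ofReal, Complex.conj_I, mul_neg]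
    rw [← Complex.exp_add]; ring_nf; exact Complex.exp_zero
  rw [this, one_smul]

lemma unitary_entries (a b c d : ℂ)
    (F1 : a * (starRingEnd ℂ) a + b * (starRingEnd ℂ) b = 1)
    (F2 : a * (starRingEnd ℂ) c + b * (starRingEnd ℂ) d = 0)
    (F2' : c * (starRingEnd ℂ) a + d * (starRingEnd ℂ) b = 0)
    (F3 : c * (starRingEnd ℂ) c + d * (starRingEnd ℂ) d = 1) :
    b = -(a * d - b * c) * (starRingEnd ℂ) c ∧ d = (a * d - b * c) * (starRingEnd ℂ) a := by
  constructor
  · linear_combination d * F2 - b * F3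
  · linear_combination -(d * F1) + b * F2'

lemma exp_real_sub (x y : ℝ) :
    Complex.exp (((x - y : ℝ) : ℂ) * I) = Complex.exp ((x:ℝ) * I) * Complex.exp (-((y:ℝ) * I)) := by
  rw [← Complex.exp_add]; push_cast; ring_nf

lemma exp_real_add (x y : ℝ) :
    Complex.exp (((x + y : ℝ) : ℂ) * I) = Complex.exp ((x:ℝ) * I) * Complex.exp ((y:ℝ) * I) := by
  rw [← Complex.exp_add]; push_cast; ring_nf

lemma exp_two (y : ℝ) :
    Complex.exp (((2 * y : ℝ) : ℂ) * I) = Complex.exp ((y:ℝ) * I) * Complex.exp ((y:ℝ) * I) := by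
  rw [← Complex.exp_add]; push_cast; ring_nf

lemma exp_cos_sin (x : ℝ) :
    Complex.exp ((x:ℝ) * I) + Complex.exp (-((x:ℝ) * I)) = 2 * Real.cos x ∧
    Complex.exp ((x:ℝ) * I) - Complex.exp (-((x:ℝ) * I)) = 2 * I * Real.sin x := by
  rw [show -((x:ℂ) * I) = ((-x : ℝ) : ℂ) * I by push_cast; ring]
  rw [Complex.exp_mul_I, Complex.exp_mul_I]
  constructor <;>
  · rw [← Complex.ofReal_cos, ← Complex.ofReal_cos, ← Complex.ofReal_sin, ← Complex.ofReal_sin]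
    push_cast [Real.cos_neg, Real.sin_neg]
    ring

lemma exp_add_pi_div_two (x : ℝ) :
    Complex.exp (((x + Real.pi / 2 : ℝ) : ℂ) * I) = Complex.exp ((x:ℝ) * I) * I := by
  rw [show ((x + Real.pi/2 : ℝ) : ℂ) * I = (x:ℝ) * I + ((Real.pi/2 : ℝ):ℂ) * I by push_cast; ring,
    Complex.exp_add]
  congr 1
  rw [Complex.exp_mul_I, ← Complex.ofReal_cos, ← Complex.ofReal_sin]
  norm_num

lemma col_decomp (a c : ℂ) (h : a * (starRingEnd ℂ) a + c * (starRingEnd ℂ) c = 1) :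
    ∃ θ α β : ℝ,
      Complex.exp ((θ:ℝ) * I) * (1 + Complex.exp ((β:ℝ) * I))
        + Complex.exp (((θ + α : ℝ):ℂ) * I) * (1 - Complex.exp ((β:ℝ) * I))
        = 2 * (Real.sqrt 2 : ℂ) * a ∧
      Complex.exp ((θ:ℝ) * I) * (1 + Complex.exp ((β:ℝ) * I))
        - Complex.exp (((θ + α : ℝ):ℂ) * I) * (1 - Complex.exp ((β:ℝ) * I))
        = 2 * (Real.sqrt 2 : ℂ) * c := by
  set s := Real.sqrt 2 with hs
  have hspos : 0 < s := Real.sqrt_pos.mpr (by norm_num)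
  have hss : s * s = 2 := Real.mul_self_sqrt (by norm_num)
  have hnorm : Complex.normSq a + Complex.normSq c = 1 := by
    rw [Complex.mul_conj, Complex.mul_conj] at h
    exact_mod_cast h
  have hpar : ‖a + c‖ ^ 2 + ‖a - c‖ ^ 2 = 2 := by
    rw [Complex.sq_norm, Complex.sq_norm]
    simp only [Complex.normSq_apply, Complex.add_re, Complex.add_im, Complex.sub_re,
      Complex.sub_im]
    have := hnorm
    simp only [Complex.normSq_apply] at this
    nlinarith [this]
  set t := ‖a - c‖ / s with htd
  have ht0 : 0 ≤ t := div_nonneg (norm_nonneg _) hspos.le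
  have ht1 : t ≤ 1 := by
    rw [htd, div_le_one hspos]
    nlinarith [norm_nonneg (a + c), norm_nonneg (a - c)]
  set φ := Real.arcsin t with hφ
  have hsin : Real.sin φ = t := Real.sin_arcsin (by linarith) ht1
  have hcos : Real.cos φ = ‖a + c‖ / s := by
    rw [hφ, Real.cos_arcsin]
    rw [show 1 - t ^ 2 = (‖a + c‖ / s) ^ 2 by
      rw [htd]; field_simp; nlinarith]
    exact Real.sqrt_sq (div_nonneg (norm_nonneg _) hspos.le)
  set p := Complex.arg (a + c) with hp
  set q := Complex.arg (a - c) with hq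
  refine ⟨p - φ, (q + Real.pi / 2) - p, 2 * φ, ?_, ?_⟩ <;>
  · rw [show ((p - φ) + ((q + Real.pi / 2) - p) : ℝ) = (q + Real.pi / 2) - φ by ring]
    rw [exp_real_sub, exp_real_sub, exp_add_pi_div_two, exp_two]
    set P := Complex.exp ((p:ℝ) * I) with hPd
    set Q := Complex.exp ((q:ℝ) * I) with hQd
    set F := Complex.exp ((φ:ℝ) * I) with hFd
    set G := Complex.exp (-((φ:ℝ) * I)) with hGd
    have hFG : F * G = 1 := exp_mul_exp_neg' φ
    have hsum : F + G = 2 * (Real.cos φ : ℂ) := (exp_cos_sin φ).1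
    have hdiff : F - G = 2 * I * (Real.sin φ : ℂ) := (exp_cos_sin φ).2
    have hP : (‖a + c‖ : ℂ) * P = a + c := Complex.norm_mul_exp_arg_mul_I (a + c)
    have hQ : (‖a - c‖ : ℂ) * Q = a - c := Complex.norm_mul_exp_arg_mul_I (a - c)
    have hI : (I:ℂ) * I = -1 := Complex.I_mul_I
    have hssC : (s:ℂ) * (s:ℂ) = 2 := by
      rw [← Complex.ofReal_mul, hss]; norm_num
    have hsC : (s:ℂ) ≠ 0 := Complex.ofReal_ne_zero.mpr hspos.ne'
    have hsum2 : (s:ℂ) * (F + G) = 2 * (‖a + c‖ : ℂ) := by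
      rw [hsum, hcos]; push_cast; field_simp
    have hdiff2 : (s:ℂ) * (F - G) = 2 * I * (‖a - c‖ : ℂ) := by
      rw [hdiff, hsin, htd]; push_cast; field_simp
    apply mul_left_cancel₀ hsC
    first
    | linear_combination ((s:ℂ)*P*F - (s:ℂ)*Q*I*F)*hFG + P*hsum2 - Q*I*hdiff2
        - 2*(‖a - c‖ : ℂ)*Q*hI + 2*hP + 2*hQ - 2*a*hssC
    | linear_combination ((s:ℂ)*P*F + (s:ℂ)*Q*I*F)*hFG + P*hsum2 + Q*I*hdiff2
        + 2*(‖a - c‖ : ℂ)*Q*hI + 2*hP - 2*hQ - 2*c*hssC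

/-- Every single-qubit unitary can be decomposed (up to global phase) into three `J`
gates: the set `{e^{iθ} J(α) J(β) J(γ) : θ, α, β, γ ∈ ℝ}` is exactly `U(2)`. -/
theorem J_decomposition (M : Matrix (Fin 2) (Fin 2) ℂ) :
    (∃ θ α β γ : ℝ, M = Complex.exp (θ * Complex.I) • (Jgate α * Jgate β * Jgate γ))
      ↔ M ∈ Matrix.unitaryGroup (Fin 2) ℂ := by
  constructor
  · rintro ⟨θ, α, β, γ, rfl⟩
    exact smul_unitary θ _ (Submonoid.mul_mem _
      (Submonoid.mul_mem _ (Jgate_unitary α) (Jgate_unitary β)) (Jgate_unitary γ))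
  · intro hM
    have h1 : star M * M = 1 := Matrix.mem_unitaryGroup_iff'.mp hM
    have h2 : M * star M = 1 := Matrix.mem_unitaryGroup_iff.mp hM
    have E1 : (starRingEnd ℂ) (M 0 0) * M 0 0 + (starRingEnd ℂ) (M 1 0) * M 1 0 = 1 := by
      have := congrFun (congrFun h1 0) 0
      simpa [Matrix.mul_apply, Fin.sum_univ_two, Matrix.star_apply, Matrix.one_apply] using this
    have E3 : (starRingEnd ℂ) (M 0 1) * M 0 1 + (starRingEnd ℂ) (M 1 1) * M 1 1 = 1 := by
      have := congrFun (congrFun h1 1) 1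
      simpa [Matrix.mul_apply, Fin.sum_univ_two, Matrix.star_apply, Matrix.one_apply] using this
    have F1 : M 0 0 * (starRingEnd ℂ) (M 0 0) + M 0 1 * (starRingEnd ℂ) (M 0 1) = 1 := by
      have := congrFun (congrFun h2 0) 0
      simpa [Matrix.mul_apply, Fin.sum_univ_two, Matrix.star_apply, Matrix.one_apply] using this
    have F2 : M 0 0 * (starRingEnd ℂ) (M 1 0) + M 0 1 * (starRingEnd ℂ) (M 1 1) = 0 := by
      have := congrFun (congrFun h2 0) 1
      simpa [Matrix.mul_apply, Fin.sum_univ_two, Matrix.star_apply, Matrix.one_apply] using this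
    have F2' : M 1 0 * (starRingEnd ℂ) (M 0 0) + M 1 1 * (starRingEnd ℂ) (M 0 1) = 0 := by
      have := congrFun (congrFun h2 1) 0
      simpa [Matrix.mul_apply, Fin.sum_univ_two, Matrix.star_apply, Matrix.one_apply] using this
    have F3 : M 1 0 * (starRingEnd ℂ) (M 1 0) + M 1 1 * (starRingEnd ℂ) (M 1 1) = 1 := by
      have := congrFun (congrFun h2 1) 1
      simpa [Matrix.mul_apply, Fin.sum_univ_two, Matrix.star_apply, Matrix.one_apply] using this
    obtain ⟨hb, hd⟩ := unitary_entries (M 0 0) (M 0 1) (M 1 0) (M 1 1) F1 F2 F2' F3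
    obtain ⟨e, hedef⟩ : ∃ e, e = M 0 0 * M 1 1 - M 0 1 * M 1 0 := ⟨_, rfl⟩
    rw [← hedef] at hb hd
    have hee : e * (starRingEnd ℂ) e = 1 := by
      rw [hb, hd] at E3
      simp only [map_neg, _root_.map_mul, Complex.conj_conj] at E3
      linear_combination E3 - e * (starRingEnd ℂ) e * E1
    have habs : ‖e‖ = 1 := by
      have h1' : Complex.normSq e = 1 := by
        have := hee
        rw [Complex.mul_conj] at this
        exact_mod_cast this
      rw [Complex.norm_def, h1', Real.sqrt_one]
    have he2 : e = Complex.exp ((Complex.arg e : ℝ) * I) := by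
      conv_lhs => rw [← Complex.norm_mul_exp_arg_mul_I e]
      rw [habs]
      norm_num
    have hcol : M 0 0 * (starRingEnd ℂ) (M 0 0) + M 1 0 * (starRingEnd ℂ) (M 1 0) = 1 := by
      linear_combination E1
    obtain ⟨θ, α, β, hA, hB⟩ := col_decomp (M 0 0) (M 1 0) hcol
    rw [exp_real_add] at hA hB
    set δ := Complex.arg e with hδdef
    refine ⟨θ, α, β, δ + Real.pi - 2 * θ - α - β, ?_⟩
    set γ := δ + Real.pi - 2 * θ - α - β with hγdef
    have hγ : Complex.exp ((γ:ℝ) * I)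
        = Complex.exp ((δ:ℝ) * I) * (-1) * (Complex.exp (-((θ:ℝ) * I)) * Complex.exp (-((θ:ℝ) * I))
            * Complex.exp (-((α:ℝ) * I)) * Complex.exp (-((β:ℝ) * I))) := by
      rw [show ((γ:ℝ):ℂ) * I = (δ:ℝ) * I + ((Real.pi:ℝ):ℂ) * I + (-((θ:ℝ) * I)) + (-((θ:ℝ) * I))
          + (-((α:ℝ) * I)) + (-((β:ℝ) * I)) by rw [hγdef]; push_cast; ring]
      rw [Complex.exp_add, Complex.exp_add, Complex.exp_add, Complex.exp_add, Complex.exp_add,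
        Complex.exp_pi_mul_I]
      ring
    -- conjugates of the column equations
    have hac := congrArg (starRingEnd ℂ) hA
    have hbc := congrArg (starRingEnd ℂ) hB
    simp only [map_add, map_sub, _root_.map_mul, _root_.map_one, map_ofNat, conj_exp_real,
      Complex.conj_ofReal] at hac hbc
    -- unit facts
    have hT : Complex.exp ((θ:ℝ) * I) * Complex.exp (-((θ:ℝ) * I)) = 1 := exp_mul_exp_neg' θ
    have hAu : Complex.exp ((α:ℝ) * I) * Complex.exp (-((α:ℝ) * I)) = 1 := exp_mul_exp_neg' α
    have hBu : Complex.exp ((β:ℝ) * I) * Complex.exp (-((β:ℝ) * I)) = 1 := exp_mul_exp_neg' β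
    have hsC : ((Real.sqrt 2 : ℝ) : ℂ) ≠ 0 :=
      Complex.ofReal_ne_zero.mpr (Real.sqrt_pos.mpr (by norm_num)).ne'
    have hsinv : ((Real.sqrt 2 : ℝ) : ℂ) * ((Real.sqrt 2 : ℝ) : ℂ)⁻¹ = 1 := mul_inv_cancel₀ hsC
    have hss2 : ((Real.sqrt 2 : ℝ) : ℂ) * ((Real.sqrt 2 : ℝ) : ℂ) = 2 := by
      rw [← Complex.ofReal_mul, Real.mul_self_sqrt (by norm_num)]; norm_num
    ext i j
    fin_cases i <;> fin_cases j <;>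
      simp [Jgate, Matrix.mul_apply, Fin.sum_univ_two, Fin.mk_zero, Fin.mk_one]
    · linear_combination (-(((Real.sqrt 2 : ℝ) : ℂ)⁻¹^3)) * hA
        - (M 0 0)*(1 + ((Real.sqrt 2 : ℝ) : ℂ)*((Real.sqrt 2 : ℝ) : ℂ)⁻¹ + (((Real.sqrt 2 : ℝ) : ℂ)*((Real.sqrt 2 : ℝ) : ℂ)⁻¹)^2) * hsinv + (M 0 0)*((Real.sqrt 2 : ℝ) : ℂ)*((Real.sqrt 2 : ℝ) : ℂ)⁻¹^3 * hss2
    · rw [hb, he2, hγ]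
      linear_combination (Complex.exp ((δ:ℝ) * I)*((Real.sqrt 2 : ℝ) : ℂ)⁻¹^3*Complex.exp (-((θ:ℝ) * I))*Complex.exp (-((α:ℝ) * I))*Complex.exp (-((β:ℝ) * I))*(1 + Complex.exp ((α:ℝ) * I) - Complex.exp ((β:ℝ) * I) + Complex.exp ((α:ℝ) * I)*Complex.exp ((β:ℝ) * I))) * hT
        + (Complex.exp ((δ:ℝ) * I)*((Real.sqrt 2 : ℝ) : ℂ)⁻¹^3*Complex.exp (-((θ:ℝ) * I))*(Complex.exp (-((β:ℝ) * I)) + Complex.exp ((β:ℝ) * I)*Complex.exp (-((β:ℝ) * I)))) * hAu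
        + (Complex.exp ((δ:ℝ) * I)*((Real.sqrt 2 : ℝ) : ℂ)⁻¹^3*Complex.exp (-((θ:ℝ) * I))*(1 - Complex.exp (-((α:ℝ) * I)))) * hBu
        + (Complex.exp ((δ:ℝ) * I)*((Real.sqrt 2 : ℝ) : ℂ)⁻¹^3) * hbc
        + (Complex.exp ((δ:ℝ) * I)*(starRingEnd ℂ) (M 1 0)*(1 + ((Real.sqrt 2 : ℝ) : ℂ)*((Real.sqrt 2 : ℝ) : ℂ)⁻¹ + (((Real.sqrt 2 : ℝ) : ℂ)*((Real.sqrt 2 : ℝ) : ℂ)⁻¹)^2)) * hsinv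
        - (Complex.exp ((δ:ℝ) * I)*(starRingEnd ℂ) (M 1 0)*((Real.sqrt 2 : ℝ) : ℂ)*((Real.sqrt 2 : ℝ) : ℂ)⁻¹^3) * hss2
    · linear_combination (-(((Real.sqrt 2 : ℝ) : ℂ)⁻¹^3)) * hB
        - (M 1 0)*(1 + ((Real.sqrt 2 : ℝ) : ℂ)*((Real.sqrt 2 : ℝ) : ℂ)⁻¹ + (((Real.sqrt 2 : ℝ) : ℂ)*((Real.sqrt 2 : ℝ) : ℂ)⁻¹)^2) * hsinv + (M 1 0)*((Real.sqrt 2 : ℝ) : ℂ)*((Real.sqrt 2 : ℝ) : ℂ)⁻¹^3 * hss2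
    · rw [hd, he2, hγ]
      linear_combination (Complex.exp ((δ:ℝ) * I)*((Real.sqrt 2 : ℝ) : ℂ)⁻¹^3*Complex.exp (-((θ:ℝ) * I))*Complex.exp (-((α:ℝ) * I))*Complex.exp (-((β:ℝ) * I))*(1 - Complex.exp ((α:ℝ) * I) - Complex.exp ((β:ℝ) * I) - Complex.exp ((α:ℝ) * I)*Complex.exp ((β:ℝ) * I))) * hT
        - (Complex.exp ((δ:ℝ) * I)*((Real.sqrt 2 : ℝ) : ℂ)⁻¹^3*Complex.exp (-((θ:ℝ) * I))*(Complex.exp (-((β:ℝ) * I)) + Complex.exp ((β:ℝ) * I)*Complex.exp (-((β:ℝ) * I)))) * hAu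
        - (Complex.exp ((δ:ℝ) * I)*((Real.sqrt 2 : ℝ) : ℂ)⁻¹^3*Complex.exp (-((θ:ℝ) * I))*(1 + Complex.exp (-((α:ℝ) * I)))) * hBu
        - (Complex.exp ((δ:ℝ) * I)*((Real.sqrt 2 : ℝ) : ℂ)⁻¹^3) * hac
        - (Complex.exp ((δ:ℝ) * I)*(starRingEnd ℂ) (M 0 0)*(1 + ((Real.sqrt 2 : ℝ) : ℂ)*((Real.sqrt 2 : ℝ) : ℂ)⁻¹ + (((Real.sqrt 2 : ℝ) : ℂ)*((Real.sqrt 2 : ℝ) : ℂ)⁻¹)^2)) * hsinv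
        + (Complex.exp ((δ:ℝ) * I)*(starRingEnd ℂ) (M 0 0)*((Real.sqrt 2 : ℝ) : ℂ)*((Real.sqrt 2 : ℝ) : ℂ)⁻¹^3) * hss2
end
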